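/- (Eigenvalues of a finite-rank perturbation are zeros of det Γ.) Assume in addition that f_1, …, f_n are linearly independent. If ξ ∈ ℂⁿ is a nonzero vector with Γ(λ)ξ = 0, where Γ(λ) is the n×n matrix with entries Γ(λ)_{ij} := ⟨f_i, R f_j⟩ − (𝐁⁻¹)_{ij}, then the vector h := Σ_{j=1}^n ξ_j · R f_j is nonzero and satisfies H_B h = λ h. In particular, if det Γ(λ) = 0 then λ is an eigenvalue of H_B. -/

import Mathlib

/-- Eigenvalues of the finite-rank perturbation `H_B = T − Σ_{ij} B_{ij} |f_i⟩⟨f_j|` are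
zeros of `det Γ(λ)`: if `f_1, …, f_n` are linearly independent and `ξ ≠ 0` satisfies
`Γ(λ) ξ = 0`, then `h = Σ_j ξ_j R f_j` is nonzero and `H_B h = λ h`.  In particular, if
`det Γ(λ) = 0` then `λ` is an eigenvalue of `H_B`. -/
theorem eigenvalue_of_det_gamma_eq_zero
    {H : Type*} [NormedAddCommGroup H] [InnerProductSpace ℂ H] [CompleteSpace H]
    (T : H →L[ℂ] H) (lam : ℂ) (R : H →L[ℂ] H)
    (hR₁ : ∀ g : H, (T - lam • (1 : H →L[ℂ] H)) (R g) = g)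
    (hR₂ : ∀ g : H, R ((T - lam • (1 : H →L[ℂ] H)) g) = g)
    (n : ℕ) (hn : 1 ≤ n) (f : Fin n → H) (hf : LinearIndependent ℂ f)
    (B : Matrix (Fin n) (Fin n) ℂ) (hB : IsUnit B.det)
    (Γ : Matrix (Fin n) (Fin n) ℂ)
    (hΓdef : ∀ i j : Fin n, Γ i j = (inner ℂ (f i) (R (f j)) : ℂ) - B⁻¹ i j)
    (ξ : Fin n → ℂ) (hξ : ξ ≠ 0) (hΓξ : Γ.mulVec ξ = 0) :
    let HB : H →L[ℂ] H := T - ∑ i : Fin n, ∑ j : Fin n,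
      B i j • ((innerSL ℂ (f j)).smulRight (f i))
    (∑ j : Fin n, ξ j • R (f j)) ≠ 0 ∧
    HB (∑ j : Fin n, ξ j • R (f j)) = lam • (∑ j : Fin n, ξ j • R (f j)) ∧
    (Γ.det = 0 → ∃ h : H, h ≠ 0 ∧ HB h = lam • h) := by
  intro HB
  set h : H := ∑ j : Fin n, ξ j • R (f j) with hh
  have hTh : (T - lam • (1 : H →L[ℂ] H)) h = ∑ j : Fin n, ξ j • f j := by
    rw [hh, map_sum]
    simp only [map_smul, hR₁]
  have hne : h ≠ 0 := by
    intro h0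
    have hz : ∑ j : Fin n, ξ j • f j = 0 := by rw [← hTh, h0, map_zero]
    have := (Fintype.linearIndependent_iff.mp hf) ξ hz
    exact hξ (funext this)
  have hinner : ∀ i : Fin n, (inner ℂ (f i) h : ℂ) = (B⁻¹).mulVec ξ i := by
    intro i
    have h0 := congrFun hΓξ i
    simp only [Matrix.mulVec, dotProduct, hΓdef, sub_mul, Finset.sum_sub_distrib,
      Pi.zero_apply, sub_eq_zero] at h0
    have h1 : (inner ℂ (f i) h : ℂ) = ∑ j : Fin n, (inner ℂ (f i) (R (f j)) : ℂ) * ξ j := by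
      simp [hh, inner_sum, inner_smul_right, mul_comm]
    rw [h1, h0, Matrix.mulVec, dotProduct]
  have hsum : (∑ i : Fin n, ∑ j : Fin n, B i j • ((inner ℂ (f j) h : ℂ) • f i))
      = ∑ j : Fin n, ξ j • f j := by
    have key : ∀ i : Fin n, ∑ j : Fin n, B i j * (B⁻¹).mulVec ξ j = ξ i := by
      intro i
      have hm : B.mulVec ((B⁻¹).mulVec ξ) = ξ := by
        rw [Matrix.mulVec_mulVec, Matrix.mul_nonsing_inv _ hB, Matrix.one_mulVec]
      simpa [Matrix.mulVec, dotProduct] using congrFun hm i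
    calc ∑ i : Fin n, ∑ j : Fin n, B i j • ((inner ℂ (f j) h : ℂ) • f i)
        = ∑ i : Fin n, (∑ j : Fin n, B i j * (B⁻¹).mulVec ξ j) • f i := by
          simp [hinner, Finset.sum_smul, smul_smul]
      _ = ∑ i : Fin n, ξ i • f i := by simp [key]
  have hHB : HB h = T h - ∑ i : Fin n, ∑ j : Fin n, B i j • ((inner ℂ (f j) h : ℂ) • f i) := by
    simp only [HB, ContinuousLinearMap.sub_apply, ContinuousLinearMap.sum_apply,
      ContinuousLinearMap.smul_apply, ContinuousLinearMap.smulRight_apply, innerSL_apply_apply,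
      smul_smul]
  have hT : T h = lam • h + ∑ j : Fin n, ξ j • f j := by
    have := hTh
    simp only [ContinuousLinearMap.sub_apply, ContinuousLinearMap.smul_apply,
      ContinuousLinearMap.one_apply] at this
    linear_combination (norm := abel) this
  have heig : HB h = lam • h := by
    rw [hHB, hsum, hT]
    abel
  exact ⟨hne, heig, fun _ => ⟨h, hne, heig⟩⟩
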